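/- Let n ≥ 1 and let Φ_A = {±e_i : 1 ≤ i ≤ n} ∪ {±(e_j − e_k) : 1 ≤ j ≠ k ≤ n} be the set of roots of type A_n in ℝ^n, with dual lattice M = ℤ^n.atomLet P ⊆ ℝ^n be a lattice polytope cut out by Φ_A: that is, P is the convex hull of a nonempty finite subset of M, and there exist a finite subset S ⊆ Φ_A and real numbers c_v (v ∈ S) with P = {x ∈ ℝ^n : ⟨x, v⟩ ≥ c_v for all v ∈ S}. Then P is normal: for every positive integer m, every point of M lying in the dilate m·P is a sum of m points of M ∩ P. -/

import Mathlib

open Finset Pointwise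

/-- The `i`-th standard basis vector of `ℝ^n`. -/
noncomputable def stdBasis (n : ℕ) (i : Fin n) : Fin n → ℝ := fun j => if j = i then 1 else 0

/-- The standard inner product on `ℝ^n`. -/
noncomputable def innerProd {n : ℕ} (u v : Fin n → ℝ) : ℝ := ∑ i, u i * v i

/-- The roots of type `A_n`: `±e_i` and `±(e_j - e_k)` for `j ≠ k`. -/
def typeA (n : ℕ) : Set (Fin n → ℝ) :=
  {v | ∃ i, v = stdBasis n i ∨ v = -stdBasis n i} ∪
  {v | ∃ j k, j ≠ k ∧ v = stdBasis n j - stdBasis n k}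

/-- The lattice `ℤ^n ⊆ ℝ^n`. -/
def intLattice (n : ℕ) : Set (Fin n → ℝ) := {u | ∀ i, ∃ m : ℤ, u i = m}

lemma innerProd_stdBasis {n : ℕ} (u : Fin n → ℝ) (i : Fin n) :
    innerProd u (stdBasis n i) = u i := by
  simp [innerProd, stdBasis, mul_ite]

lemma innerProd_neg {n : ℕ} (u v : Fin n → ℝ) : innerProd u (-v) = -innerProd u v := by
  simp [innerProd, mul_neg]

lemma innerProd_sub {n : ℕ} (u v w : Fin n → ℝ) :
    innerProd u (v - w) = innerProd u v - innerProd u w := by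
  simp [innerProd, mul_sub, Finset.sum_sub_distrib]

lemma innerProd_linear {n : ℕ} (v : Fin n → ℝ) :
    IsLinearMap ℝ (fun x : Fin n → ℝ => innerProd x v) := by
  constructor
  · intro a b; simp [innerProd, add_mul, Finset.sum_add_distrib]
  · intro r a; simp [innerProd, Finset.mul_sum, mul_assoc]

lemma innerProd_smul {n : ℕ} (r : ℝ) (u v : Fin n → ℝ) :
    innerProd (r • u) v = r * innerProd u v := (innerProd_linear v).2 r u

/-- The "Hermite identity" for floor division. -/
lemma hermite (m : ℕ) (hm : 0 < m) (X : ℤ) :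
    ∑ t ∈ Finset.range m, (X + (t : ℤ)) / (m : ℤ) = X := by
  have hmne : (m : ℤ) ≠ 0 := by exact_mod_cast hm.ne'
  induction X using Int.induction_on with
  | zero =>
    apply Finset.sum_eq_zero
    intro t ht
    rw [Finset.mem_range] at ht
    exact Int.ediv_eq_zero_of_lt (by omega) (by omega)
  | succ k ih =>
    have h2 : ∑ t ∈ Finset.range (m + 1), ((k : ℤ) + (t : ℤ)) / (m : ℤ)
        = ∑ t ∈ Finset.range m, ((k : ℤ) + ((t + 1 : ℕ) : ℤ)) / (m : ℤ)
          + ((k : ℤ) + ((0 : ℕ) : ℤ)) / (m : ℤ) := Finset.sum_range_succ' _ m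
    have h3 : ∑ t ∈ Finset.range (m + 1), ((k : ℤ) + (t : ℤ)) / (m : ℤ)
        = ∑ t ∈ Finset.range m, ((k : ℤ) + (t : ℤ)) / (m : ℤ)
          + ((k : ℤ) + ((m : ℕ) : ℤ)) / (m : ℤ) := Finset.sum_range_succ _ m
    have e0 : ((k : ℤ) + ((0 : ℕ) : ℤ)) / (m : ℤ) = (k : ℤ) / (m : ℤ) := by norm_num
    have hm' : ((k : ℤ) + ((m : ℕ) : ℤ)) / (m : ℤ) = (k : ℤ) / (m : ℤ) + 1 := by
      have := Int.add_mul_ediv_right (k : ℤ) 1 hmne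
      simpa using this
    have hcong : ∑ t ∈ Finset.range m, ((k : ℤ) + 1 + (t : ℤ)) / (m : ℤ)
        = ∑ t ∈ Finset.range m, ((k : ℤ) + ((t + 1 : ℕ) : ℤ)) / (m : ℤ) :=
      Finset.sum_congr rfl fun t _ => by push_cast; ring_nf
    rw [hcong]
    omega
  | pred k ih =>
    have h2 : ∑ t ∈ Finset.range (m + 1), (-(k : ℤ) - 1 + (t : ℤ)) / (m : ℤ)
        = ∑ t ∈ Finset.range m, (-(k : ℤ) - 1 + ((t + 1 : ℕ) : ℤ)) / (m : ℤ)
          + (-(k : ℤ) - 1 + ((0 : ℕ) : ℤ)) / (m : ℤ) := Finset.sum_range_succ' _ m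
    have h3 : ∑ t ∈ Finset.range (m + 1), (-(k : ℤ) - 1 + (t : ℤ)) / (m : ℤ)
        = ∑ t ∈ Finset.range m, (-(k : ℤ) - 1 + (t : ℤ)) / (m : ℤ)
          + (-(k : ℤ) - 1 + ((m : ℕ) : ℤ)) / (m : ℤ) := Finset.sum_range_succ _ m
    have e0 : (-(k : ℤ) - 1 + ((0 : ℕ) : ℤ)) / (m : ℤ) = (-(k : ℤ) - 1) / (m : ℤ) := by norm_num
    have hm' : (-(k : ℤ) - 1 + ((m : ℕ) : ℤ)) / (m : ℤ) = (-(k : ℤ) - 1) / (m : ℤ) + 1 := by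
      have := Int.add_mul_ediv_right (-(k : ℤ) - 1) 1 hmne
      simpa using this
    have hcong : ∑ t ∈ Finset.range m, (-(k : ℤ) + (t : ℤ)) / (m : ℤ)
        = ∑ t ∈ Finset.range m, (-(k : ℤ) - 1 + ((t + 1 : ℕ) : ℤ)) / (m : ℤ) :=
      Finset.sum_congr rfl fun t _ => by push_cast; ring_nf
    rw [hcong] at ih
    omega

lemma ediv_le_of_le {m a q : ℤ} (hm : 0 < m) (h : a ≤ q * m + (m - 1)) : a / m ≤ q := by
  have hz : (m - 1) / m = 0 := Int.ediv_eq_zero_of_lt (by omega) (by omega)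
  have h1 : a / m ≤ (m - 1 + q * m) / m := Int.ediv_le_ediv hm (by omega)
  rw [Int.add_mul_ediv_right _ _ hm.ne', hz] at h1
  omega

lemma le_ediv_of_le {m a q : ℤ} (hm : 0 < m) (h : q * m ≤ a) : q ≤ a / m :=
  (Int.le_ediv_iff_mul_le hm).2 h

lemma innerProd_int {n : ℕ} {v : Fin n → ℝ} (hv : v ∈ typeA n) {u : Fin n → ℝ}
    (hu : u ∈ intLattice n) : ∃ z : ℤ, innerProd u v = z := by
  rcases hv with ⟨i, hi | hi⟩ | ⟨j, k, _, hjk⟩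
  · obtain ⟨z, hz⟩ := hu i
    exact ⟨z, by rw [hi, innerProd_stdBasis, hz]⟩
  · obtain ⟨z, hz⟩ := hu i
    exact ⟨-z, by rw [hi, innerProd_neg, innerProd_stdBasis, hz]; push_cast; ring⟩
  · obtain ⟨zj, hzj⟩ := hu j
    obtain ⟨zk, hzk⟩ := hu k
    exact ⟨zj - zk, by
      rw [hjk, innerProd_sub, innerProd_stdBasis, innerProd_stdBasis, hzj, hzk]; push_cast; ring⟩

/-- Every lattice polytope cut out by the root system `A_n` is normal: every lattice
point of `m·P` is a sum of `m` lattice points of `P`. -/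
theorem typeA_polytope_normal (n : ℕ) (hn : 1 ≤ n) (P : Set (Fin n → ℝ))
    (hpoly : ∃ V : Set (Fin n → ℝ), V.Finite ∧ V.Nonempty ∧ V ⊆ intLattice n ∧
      P = convexHull ℝ V)
    (hcut : ∃ S : Finset (Fin n → ℝ), ↑S ⊆ typeA n ∧ ∃ c : (Fin n → ℝ) → ℝ,
      P = {x | ∀ v ∈ S, c v ≤ innerProd x v})
    (m : ℕ) (hm : 0 < m) (x : Fin n → ℝ) (hx : x ∈ intLattice n) (hxm : x ∈ (m : ℝ) • P) :
    ∃ f : Fin m → (Fin n → ℝ), (∀ j, f j ∈ intLattice n ∧ f j ∈ P) ∧ x = ∑ j, f j := by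
  obtain ⟨V, hVf, hVne, hVint, hPV⟩ := hpoly
  obtain ⟨S, hS, c, hPc⟩ := hcut
  choose X hX using hx
  have hmZ : (0 : ℤ) < (m : ℤ) := by exact_mod_cast hm
  -- Every point of P satisfies the rounded-up constraints.
  have KA : ∀ v ∈ S, ∀ p ∈ P, ((⌈c v⌉ : ℤ) : ℝ) ≤ innerProd p v := by
    intro v hv p hp
    have hsub : P ⊆ {y : Fin n → ℝ | ((⌈c v⌉ : ℤ) : ℝ) ≤ innerProd y v} := by
      rw [hPV]
      apply convexHull_min _ (convex_halfSpace_ge (innerProd_linear v) _)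
      intro u hu
      have huP : u ∈ P := by rw [hPV]; exact subset_convexHull ℝ V hu
      have h1 : c v ≤ innerProd u v := by rw [hPc] at huP; exact huP v hv
      obtain ⟨z, hz⟩ := innerProd_int (hS hv) (hVint hu)
      show ((⌈c v⌉ : ℤ) : ℝ) ≤ innerProd u v
      rw [hz] at h1 ⊢
      exact_mod_cast Int.ceil_le.2 h1
    exact hsub hp
  -- x satisfies m times the rounded constraints.
  obtain ⟨p, hpP, hxp⟩ := Set.mem_smul_set.mp hxm
  have KB : ∀ v ∈ S, (m : ℝ) * ((⌈c v⌉ : ℤ) : ℝ) ≤ innerProd x v := by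
    intro v hv
    rw [← hxp, innerProd_smul]
    exact mul_le_mul_of_nonneg_left (KA v hv p hpP) (by positivity)
  -- the decomposition
  set y : Fin m → Fin n → ℝ := fun t i => (((X i + (t : ℕ)) / (m : ℤ) : ℤ) : ℝ) with hy
  refine ⟨y, ?_, ?_⟩
  · intro t
    constructor
    · intro i; simp only [hy]; exact ⟨_, rfl⟩
    · rw [hPc]
      simp only [Set.mem_setOf_eq, hy]
      intro v hv
      have hcv : c v ≤ ((⌈c v⌉ : ℤ) : ℝ) := Int.le_ceil _
      have htm : (t : ℕ) < m := t.2
      rcases hS hv with ⟨i, hi | hi⟩ | ⟨j, k, _, hjk⟩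
      · subst hi
        simp only [innerProd_stdBasis]
        have h1 : (m : ℝ) * ((⌈c (stdBasis n i)⌉ : ℤ) : ℝ) ≤ x i := by
          have := KB _ hv; rwa [innerProd_stdBasis] at this
        rw [hX i] at h1
        have h2 : (⌈c (stdBasis n i)⌉ * (m : ℤ) : ℤ) ≤ X i := by
          have : ((⌈c (stdBasis n i)⌉ * (m : ℤ) : ℤ) : ℝ) ≤ ((X i : ℤ) : ℝ) := by
            push_cast; linarith
          exact_mod_cast this
        have h3 : ⌈c (stdBasis n i)⌉ ≤ (X i + ((t : ℕ) : ℤ)) / (m : ℤ) :=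
          le_ediv_of_le hmZ (by omega)
        calc c (stdBasis n i) ≤ _ := hcv
          _ ≤ _ := by exact_mod_cast h3
      · subst hi
        simp only [innerProd_neg, innerProd_stdBasis]
        have h1 : (m : ℝ) * ((⌈c (-stdBasis n i)⌉ : ℤ) : ℝ) ≤ -(x i) := by
          have := KB _ hv; rwa [innerProd_neg, innerProd_stdBasis] at this
        rw [hX i] at h1
        have h2 : X i ≤ (-⌈c (-stdBasis n i)⌉) * (m : ℤ) := by
          have : ((X i : ℤ) : ℝ) ≤ (((-⌈c (-stdBasis n i)⌉) * (m : ℤ) : ℤ) : ℝ) := by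
            push_cast; linarith
          exact_mod_cast this
        have h3 : (X i + ((t : ℕ) : ℤ)) / (m : ℤ) ≤ -⌈c (-stdBasis n i)⌉ :=
          ediv_le_of_le hmZ (by omega)
        have h4 : ((⌈c (-stdBasis n i)⌉ : ℤ) : ℝ)
            ≤ -(((X i + ((t : ℕ) : ℤ)) / (m : ℤ) : ℤ) : ℝ) := by
          have h5 : ⌈c (-stdBasis n i)⌉ ≤ -((X i + ((t : ℕ) : ℤ)) / (m : ℤ)) := by omega
          exact_mod_cast h5
        linarith
      · subst hjk
        simp only [innerProd_sub, innerProd_stdBasis]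
        set q := ⌈c (stdBasis n j - stdBasis n k)⌉ with hq
        have h1 : (m : ℝ) * ((q : ℤ) : ℝ) ≤ x j - x k := by
          have := KB _ hv
          rwa [innerProd_sub, innerProd_stdBasis, innerProd_stdBasis, ← hq] at this
        rw [hX j, hX k] at h1
        have h2 : q * (m : ℤ) ≤ X j - X k := by
          have : ((q * (m : ℤ) : ℤ) : ℝ) ≤ ((X j - X k : ℤ) : ℝ) := by push_cast; linarith
          exact_mod_cast this
        have h4 : ((X k + ((t : ℕ) : ℤ)) / (m : ℤ)) * (m : ℤ) ≤ X k + ((t : ℕ) : ℤ) :=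
          Int.ediv_mul_le _ hmZ.ne'
        have h3 : (X k + ((t : ℕ) : ℤ)) / (m : ℤ) + q ≤ (X j + ((t : ℕ) : ℤ)) / (m : ℤ) := by
          apply le_ediv_of_le hmZ
          rw [add_mul]
          omega
        have h5 : ((q : ℤ) : ℝ) ≤ (((X j + ((t : ℕ) : ℤ)) / (m : ℤ) : ℤ) : ℝ)
            - (((X k + ((t : ℕ) : ℤ)) / (m : ℤ) : ℤ) : ℝ) := by
          have h6 : q ≤ (X j + ((t : ℕ) : ℤ)) / (m : ℤ) - (X k + ((t : ℕ) : ℤ)) / (m : ℤ) := by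
            omega
          exact_mod_cast h6
        linarith
  · funext i
    rw [Finset.sum_apply]
    simp only [hy]
    have h1 : ∑ t : Fin m, ((X i + ((t : ℕ) : ℤ)) / (m : ℤ)) = X i := by
      rw [Fin.sum_univ_eq_sum_range (fun t : ℕ => (X i + (t : ℤ)) / (m : ℤ))]
      exact hermite m hm (X i)
    have h2 : (∑ t : Fin m, (((X i + ((t : ℕ) : ℤ)) / (m : ℤ) : ℤ) : ℝ))
        = (((∑ t : Fin m, ((X i + ((t : ℕ) : ℤ)) / (m : ℤ)) : ℤ)) : ℝ) := by
      push_cast; rfl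
    rw [hX i, h2, h1]
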